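/- arXiv:1701.03184 — 3 statements merged into one kernel-verified Lean document; each statement's English description precedes it below -/
import Mathlib

section
/- For every right R_n-module K one has Hom_{R_{n+1}}(F_1 L_n, F_0 K) = 0, and consequently F_1 F_0 K ≅ F_0 F_0 K as right R_{n+2}-modules. -/
universe u

open MulOpposite

/-- A ring homomorphism out of an opposite ring into a commutative ring. -/
def opCompCommHom {A B : Type*} [Ring A] [CommRing B] (f : A →+* B) : Aᵐᵒᵖ →+* B where
  toFun t := f t.unop
  map_one' := by simp
  map_mul' _ _ := by simp [mul_comm]
  map_zero' := by simp
  map_add' _ _ := by simp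

/-- The data of a ring `R` together with a `k`-`R`-bimodule `L`, used to form the
one-point extension `R[L]`. -/
structure OPEData (k : Type u) [Field k] : Type (u + 1) where
  R : Type u
  [ringR : Ring R]
  L : Type u
  [acgL : AddCommGroup L]
  [modkL : Module k L]
  [modRL : Module Rᵐᵒᵖ L]
  [commL : SMulCommClass k Rᵐᵒᵖ L]

attribute [instance] OPEData.ringR OPEData.acgL OPEData.modkL OPEData.modRL OPEData.commL

namespace OPEData

variable {k : Type u} [Field k] (X : OPEData k)

instance leftPairModule : Module (X.R × k) X.L := Module.compHom X.L (RingHom.snd X.R k)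

instance rightPairModule : Module (X.R × k)ᵐᵒᵖ X.L :=
  Module.compHom X.L (RingHom.op (RingHom.fst X.R k))

@[simp] theorem pair_smul (x : X.R × k) (l : X.L) : x • l = x.2 • l := rfl

@[simp] theorem pairop_smul (x : (X.R × k)ᵐᵒᵖ) (l : X.L) : x • l = op x.unop.1 • l := rfl

instance pairSMulComm : SMulCommClass (X.R × k) (X.R × k)ᵐᵒᵖ X.L :=
  ⟨fun a b l => smul_comm a.2 (op b.unop.1) l⟩

/-- The one-point extension `R[L]`, realized as the triangular matrix ring
`[[R, 0], [L, k]]` (a square-zero extension of `R × k` by `L`). -/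
abbrev ring' : Type u := TrivSqZeroExt (X.R × k) X.L

variable (M : Type u) [AddCommGroup M] [Module X.Rᵐᵒᵖ M]

/-- Scalar multiplication by `a : k` on `L`, as an endomorphism of the right
`R`-module `L`. -/
def kScale (a : k) : X.L →ₗ[X.Rᵐᵒᵖ] X.L where
  toFun l := a • l
  map_add' x y := smul_add a x y
  map_smul' r l := smul_comm a r l

@[simp] theorem kScale_apply (a : k) (l : X.L) : X.kScale a l = a • l := rfl

/-- The right `R[L]`-module structure on `F₁ M = (Hom_R(L, M), M, id)`, namely on
`Hom_R(L,M) × M`. -/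
instance F1Module : Module (X.ring')ᵐᵒᵖ ((X.L →ₗ[X.Rᵐᵒᵖ] M) × M) where
  smul t p := (p.1 ∘ₗ X.kScale t.unop.fst.2, op t.unop.fst.1 • p.2 + p.1 t.unop.snd)
  one_smul p := by
    refine Prod.ext (LinearMap.ext fun z => ?_) ?_
    · show p.1 ((1 : k) • z) = p.1 z
      rw [one_smul]
    · show op ((1 : X.R × k).1) • p.2 + p.1 (0 : X.L) = p.2
      simp
  mul_smul x y p := by
    refine Prod.ext (LinearMap.ext fun z => ?_) ?_
    · show p.1 ((x * y).unop.fst.2 • z) = p.1 (y.unop.fst.2 • x.unop.fst.2 • z)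
      rw [unop_mul, TrivSqZeroExt.fst_mul, ← mul_smul]
      rfl
    · show op ((x * y).unop.fst.1) • p.2 + p.1 ((x * y).unop.snd)
        = op x.unop.fst.1 • (op y.unop.fst.1 • p.2 + p.1 y.unop.snd)
          + (p.1 ∘ₗ X.kScale y.unop.fst.2) x.unop.snd
      rw [unop_mul, TrivSqZeroExt.fst_mul, TrivSqZeroExt.snd_mul]
      simp only [pair_smul, pairop_smul, Prod.fst_mul, smul_add, map_add, map_smul,
        LinearMap.comp_apply, op_mul, mul_smul, unop_op, kScale_apply]
      abel
  smul_zero t := by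
    refine Prod.ext (LinearMap.ext fun z => ?_) ?_
    · show (0 : X.L →ₗ[X.Rᵐᵒᵖ] M) (X.kScale t.unop.fst.2 z) = 0
      simp
    · show op t.unop.fst.1 • (0 : M) + (0 : X.L →ₗ[X.Rᵐᵒᵖ] M) t.unop.snd = 0
      simp
  smul_add t p q := by
    refine Prod.ext (LinearMap.ext fun z => ?_) ?_
    · show (p.1 + q.1) (X.kScale t.unop.fst.2 z)
        = p.1 (X.kScale t.unop.fst.2 z) + q.1 (X.kScale t.unop.fst.2 z)
      simp
    · show op t.unop.fst.1 • (p.2 + q.2) + (p.1 + q.1) t.unop.snd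
        = (op t.unop.fst.1 • p.2 + p.1 t.unop.snd)
          + (op t.unop.fst.1 • q.2 + q.1 t.unop.snd)
      simp only [LinearMap.add_apply, smul_add]
      abel
  add_smul s t p := by
    refine Prod.ext (LinearMap.ext fun z => ?_) ?_
    · show p.1 ((s + t).unop.fst.2 • z)
        = p.1 (s.unop.fst.2 • z) + p.1 (t.unop.fst.2 • z)
      rw [unop_add, TrivSqZeroExt.fst_add, ← map_add, ← add_smul]
      rfl
    · show op ((s + t).unop.fst.1) • p.2 + p.1 ((s + t).unop.snd)
        = (op s.unop.fst.1 • p.2 + p.1 s.unop.snd)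
          + (op t.unop.fst.1 • p.2 + p.1 t.unop.snd)
      rw [unop_add, TrivSqZeroExt.fst_add, TrivSqZeroExt.snd_add]
      show op (s.unop.fst.1 + t.unop.fst.1) • p.2 + _ = _
      rw [op_add, add_smul, map_add]
      try abel
  zero_smul p := by
    refine Prod.ext (LinearMap.ext fun z => ?_) ?_
    · show p.1 ((0 : k) • z) = 0
      rw [zero_smul, map_zero]
    · show op ((0 : X.R × k).1) • p.2 + p.1 (0 : X.L) = 0
      simp

instance homSMulCommClass : SMulCommClass X.Rᵐᵒᵖ k X.L :=
  SMulCommClass.symm k X.Rᵐᵒᵖ X.L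

instance stepSMulCommClass :
    SMulCommClass k (X.ring')ᵐᵒᵖ ((X.L →ₗ[X.Rᵐᵒᵖ] X.L) × X.L) where
  smul_comm a t p := by
    refine Prod.ext (LinearMap.ext fun z => ?_) ?_
    · rfl
    · show a • (op t.unop.fst.1 • p.2 + p.1 t.unop.snd)
        = op t.unop.fst.1 • (a • p.2) + (a • p.1) t.unop.snd
      rw [smul_add, smul_comm]
      rfl

/-- The one-point extension step: `R[L]` together with the bimodule `L' = F₁ L`. -/
def step : OPEData k where
  R := X.ring'
  L := (X.L →ₗ[X.Rᵐᵒᵖ] X.L) × X.L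
  ringR := inferInstance
  acgL := inferInstance
  modkL := inferInstance
  modRL := X.F1Module X.L
  commL := inferInstance

/-- A bundled right module over the ring of `X`. -/
structure RMod (X : OPEData k) : Type (u + 1) where
  carrier : Type u
  [acg : AddCommGroup carrier]
  [mod : Module X.Rᵐᵒᵖ carrier]

attribute [instance] RMod.acg RMod.mod

/-- Isomorphism of bundled right modules. -/
def RIso {X : OPEData k} (M N : RMod X) : Prop :=
  Nonempty (M.carrier ≃ₗ[X.Rᵐᵒᵖ] N.carrier)

/-- A bundled module is finitely presented. -/
def RMod.FP {X : OPEData k} (M : RMod X) : Prop :=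
  Module.FinitePresentation X.Rᵐᵒᵖ M.carrier

/-- The first-component projection of the triangular ring `R[L]`, as a ring
homomorphism to `R × k`. -/
def fstRingHom : X.ring' →+* X.R × k where
  toFun t := t.fst
  map_one' := rfl
  map_mul' a b := TrivSqZeroExt.fst_mul a b
  map_zero' := rfl
  map_add' _ _ := rfl

/-- The ring homomorphism `(R[L])ᵐᵒᵖ → Rᵐᵒᵖ` used to define `F₀`. -/
def fstOpHom : (X.ring')ᵐᵒᵖ →+* X.Rᵐᵒᵖ :=
  (RingHom.op (RingHom.fst X.R k)).comp (RingHom.op X.fstRingHom)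

/-- The functor `F₀ : Mod-R → Mod-R[L]`, `M ↦ (0, M, 0)`, on objects. -/
def F0 (M : RMod X) : RMod X.step where
  carrier := M.carrier
  acg := M.acg
  mod := Module.compHom M.carrier X.fstOpHom

/-- The functor `F₁ : Mod-R → Mod-R[L]`, `M ↦ (Hom_R(L,M), M, id)`, on objects. -/
def F1 (M : RMod X) : RMod X.step where
  carrier := (X.L →ₗ[X.Rᵐᵒᵖ] M.carrier) × M.carrier
  acg := inferInstance
  mod := X.F1Module M.carrier

/-- `L` as a bundled right `R`-module. -/
def LBdl : RMod X where
  carrier := X.L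
  acg := inferInstance
  mod := inferInstance

/-- The module `T = (k, 0, 0)` over `R[L]`. -/
def TStep : RMod X.step where
  carrier := k
  acg := inferInstance
  mod := Module.compHom k
    (opCompCommHom ((RingHom.snd X.R k).comp X.fstRingHom))

end OPEData

section Tower

open OPEData

variable (V : Type u) [CommRing V] [IsDomain V] [IsDiscreteValuationRing V]

open IsLocalRing

/-- The right `V`-module structure on the residue field `V/𝔪`. -/
noncomputable instance residueOpModule : Module Vᵐᵒᵖ (ResidueField V) :=
  Module.compHom (ResidueField V) (opCompCommHom (residue V))

instance residueOpSMulComm :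
    SMulCommClass (ResidueField V) Vᵐᵒᵖ (ResidueField V) :=
  ⟨fun a b l => by
    show a * ((residue V b.unop) * l) = (residue V b.unop) * (a * l)
    rw [mul_left_comm]⟩

/-- The base datum: the ring `V` with the `k`-`V`-bimodule `k = V/𝔪`. -/
noncomputable def baseData : OPEData (ResidueField V) where
  R := V
  L := ResidueField V
  ringR := inferInstance
  acgL := inferInstance
  modkL := inferInstance
  modRL := inferInstance
  commL := inferInstance

/-- The tower of iterated one-point extensions `R_0 = V`, `R_{n+1} = R_n[L_n]`. -/
noncomputable def TowerData : ℕ → OPEData (ResidueField V)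
  | 0 => baseData V
  | n + 1 => (TowerData n).step

/-- The module `V/𝔪` viewed as a right `V`-module (this is `T_0`). -/
noncomputable def TZero : RMod (TowerData V 0) where
  carrier := ResidueField V
  acg := inferInstance
  mod := residueOpModule V

/-- The modules `T_n = (k, 0, 0) ∈ Mod-R_n`. -/
noncomputable def TMod : (n : ℕ) → RMod (TowerData V n)
  | 0 => TZero V
  | n + 1 => (TowerData V n).TStep

/-- Iterated application of `F₀`. -/
noncomputable def F0pow : (m : ℕ) → {n : ℕ} → RMod (TowerData V n) → RMod (TowerData V (n + m))
  | 0, _, M => M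
  | m + 1, _, M => (TowerData V _).F0 (F0pow m M)

/-- Iterated application of `F₁`. -/
noncomputable def F1pow : (m : ℕ) → {n : ℕ} → RMod (TowerData V n) → RMod (TowerData V (n + m))
  | 0, _, M => M
  | m + 1, _, M => (TowerData V _).F1 (F1pow m M)

/-- `V` as a right module over itself. -/
noncomputable def VMod : RMod (TowerData V 0) where
  carrier := V
  acg := inferInstance
  mod := inferInstanceAs (Module Vᵐᵒᵖ V)

end Tower


open OPEData in
theorem OPEData.homF1F0aux {k : Type u} [Field k] (X : OPEData k) (K : RMod X)
    (f : (X.F1 X.LBdl).carrier →ₗ[(X.step.R)ᵐᵒᵖ] (X.F0 K).carrier) : f = 0 := by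
  have hact : ∀ t : (X.step.R)ᵐᵒᵖ, X.fstOpHom t = 0 →
      ∀ y : K.carrier, X.fstOpHom t • y = 0 := by
    intro t ht y
    rw [ht, zero_smul]
  have key : ∀ p : (X.F1 X.LBdl).carrier, f p = 0 := by
    intro p
    have h1 : f (p.1, 0) = 0 := by
      have he : (op (TrivSqZeroExt.inl ((0 : X.R), (1 : k))) : (X.step.R)ᵐᵒᵖ) • p
          = (p.1, (0 : X.L)) := by
        refine Prod.ext (LinearMap.ext fun z => ?_) ?_
        · show p.1 ((1 : k) • z) = p.1 z
          rw [one_smul]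
        · show op ((0 : X.R)) • p.2 + p.1 (0 : X.L) = 0
          simp
      refine (congrArg f he).symm.trans ?_
      rw [f.map_smul]
      have hz : X.fstOpHom (op (TrivSqZeroExt.inl ((0 : X.R), (1 : k)) : X.ring')) = 0 := by
        show op ((TrivSqZeroExt.inl ((0 : X.R), (1 : k)) : X.ring').fst.1) = 0
        simp
      exact hact _ hz (f p)
    have h2 : f (0, p.2) = 0 := by
      let q : (X.F1 X.LBdl).carrier := ((LinearMap.id : X.L →ₗ[X.Rᵐᵒᵖ] X.L), (0 : X.L))
      have ht : (op (TrivSqZeroExt.inr p.2) : (X.step.R)ᵐᵒᵖ) • q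
          = ((0 : X.L →ₗ[X.Rᵐᵒᵖ] X.L), p.2) := by
        refine Prod.ext (LinearMap.ext fun z => ?_) ?_
        · show (LinearMap.id : X.L →ₗ[X.Rᵐᵒᵖ] X.L) ((0 : k) • z) = 0
          simp
        · show op ((0 : X.R)) • (0 : X.L) + (LinearMap.id : X.L →ₗ[X.Rᵐᵒᵖ] X.L) p.2 = p.2
          simp
          rfl
      refine (congrArg f ht).symm.trans ?_
      rw [f.map_smul]
      have hz : X.fstOpHom (op (TrivSqZeroExt.inr p.2 : X.ring')) = 0 := by
        show op ((TrivSqZeroExt.inr p.2 : X.ring').fst.1) = 0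
        simp
        rfl
      exact hact _ hz (f q)
    have hp : p = (p.1, 0) + (0, p.2) := by
      exact Prod.ext (add_zero p.1).symm (zero_add p.2).symm
    exact (congrArg f hp).trans ((f.map_add _ _).trans ((congrArg₂ (· + ·) h1 h2).trans (add_zero 0)))
  exact LinearMap.ext key

open OPEData in
/-- For every right `R_n`-module `K` one has `Hom_{R_{n+1}}(F₁ L_n, F₀ K) = 0`, and
consequently `F₁ F₀ K ≅ F₀ F₀ K` as right `R_{n+2}`-modules. -/
theorem hom_F1L_F0_eq_zero_and_F1F0_iso_F0F0
    (V : Type u) [CommRing V] [IsDomain V] [IsDiscreteValuationRing V] (n : ℕ)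
    (K : RMod (TowerData V n)) :
    (∀ f : ((TowerData V n).F1 ((TowerData V n).LBdl)).carrier
        →ₗ[((TowerData V n).step.R)ᵐᵒᵖ] ((TowerData V n).F0 K).carrier, f = 0) ∧
      RIso ((TowerData V n).step.F1 ((TowerData V n).F0 K))
        ((TowerData V n).step.F0 ((TowerData V n).F0 K)) := by
  have h1 := OPEData.homF1F0aux (TowerData V n) K
  refine ⟨h1, ⟨?_⟩⟩
  exact
    { toFun := fun p => p.2
      invFun := fun x => (0, x)
      map_add' := fun p q => rfl
      map_smul' := fun t p => by
        have hp1 : p.1 = 0 := h1 p.1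
        show op t.unop.fst.1 • p.2 + p.1 t.unop.snd = _
        rw [hp1, LinearMap.zero_apply, add_zero]
        rfl
      left_inv := fun p => Prod.ext (h1 p.1).symm rfl
      right_inv := fun x => rfl }
end

section
/- Let R be an artin algebra, let i : A → B_1 be an embedding and μ : B_2 → C a short embedding (of length n) between finitely presented R-modules, and suppose that 0 → A → B_1 ⊕ B_2 → C → 0, with left map (i, π)^T and right map (γ, μ), is an almost split exact sequence. Then i is a short embedding (of length ≤ n + 1). -/
universe u v

/-- A pp-`n`-formula over the ring `R`: `∃ y₁ … y_{nex}` such that the `neq` homogeneous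
linear equations encoded by the matrix `H` hold of `(x, y)`. -/
structure PPFormula (R : Type u) [Ring R] (n : ℕ) : Type u where
  nex : ℕ
  neq : ℕ
  H : Matrix (Fin n ⊕ Fin nex) (Fin neq) R

namespace PPFormula

variable {R : Type u} [Ring R] {n : ℕ}

/-- The solution set of a pp-formula in a module. -/
def Holds (φ : PPFormula R n) (M : Type v) [AddCommGroup M] [Module R M]
    (x : Fin n → M) : Prop :=
  ∃ y : Fin φ.nex → M, ∀ j : Fin φ.neq,
    (∑ i, φ.H (Sum.inl i) j • x i) + (∑ l, φ.H (Sum.inr l) j • y l) = 0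

/-- The pp-definable subgroup `φ(M)` attached to a pp-1-formula. -/
def sub (φ : PPFormula R 1) (M : Type v) [AddCommGroup M] [Module R M] :
    AddSubgroup M where
  carrier := {m : M | φ.Holds M (fun _ => m)}
  zero_mem' := ⟨0, fun j => by simp⟩
  add_mem' := by
    rintro a b ⟨y, hy⟩ ⟨z, hz⟩
    refine ⟨y + z, fun j => ?_⟩
    have h := congrArg₂ (· + ·) (hy j) (hz j)
    simp only [Pi.add_apply, smul_add, Finset.sum_add_distrib] at *
    rw [add_zero] at h
    rw [← h]; abel
  neg_mem' := by
    rintro a ⟨y, hy⟩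
    refine ⟨-y, fun j => ?_⟩
    have h := congrArg (fun t => -t) (hy j)
    simp only [Pi.neg_apply, smul_neg, Finset.sum_neg_distrib, neg_add_rev, neg_zero] at *
    rw [← h]; abel

/-- Implication ordering on pp-formulas: `φ ≤ ψ` iff in every module every solution of `φ`
is a solution of `ψ`. -/
def Le (φ ψ : PPFormula R n) : Prop :=
  ∀ (M : Type u) [AddCommGroup M] [Module R M] (x : Fin n → M), φ.Holds M x → ψ.Holds M x

/-- `φ` generates the pp-type of `a` in `M`. -/
def Generates (φ : PPFormula R 1) (M : Type u) [AddCommGroup M] [Module R M]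
    (a : M) : Prop :=
  a ∈ φ.sub M ∧ ∀ ψ : PPFormula R 1, a ∈ ψ.sub M → φ.Le ψ

/-- The interval `[ψ, φ]` in the lattice of pp-1-formulas has length at most `N`:
there is no strictly ascending chain of length `> N` between `ψ` and `φ`. -/
def IntervalLengthLE (ψ φ : PPFormula R 1) (N : ℕ) : Prop :=
  ∀ (m : ℕ) (c : Fin (m + 1) → PPFormula R 1),
    (∀ i, ψ.Le (c i) ∧ (c i).Le φ) →
    (∀ i : Fin m, (c i.castSucc).Le (c i.succ) ∧ ¬ (c i.succ).Le (c i.castSucc)) →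
    m ≤ N

end PPFormula

section Defs

variable (R : Type u) [Ring R]

/-- An embedding of modules is short of length `N` if for every element `a` of the source,
any generator of the pp-type of `a` and any generator of the pp-type of its image bound an
interval of length at most `N` in the lattice of pp-formulas. -/
def IsShortOfLength {M N : Type u} [AddCommGroup M] [Module R M] [AddCommGroup N]
    [Module R N] (f : M →ₗ[R] N) (B : ℕ) : Prop :=
  Function.Injective f ∧
    ∀ (a : M) (φ ψ : PPFormula R 1), φ.Generates M a → ψ.Generates N (f a) →
      PPFormula.IntervalLengthLE ψ φ B

/-- A short embedding of modules. -/
def IsShortEmbedding {M N : Type u} [AddCommGroup M] [Module R M] [AddCommGroup N]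
    [Module R N] (f : M →ₗ[R] N) : Prop :=
  ∃ B : ℕ, IsShortOfLength R f B

/-- A pure embedding: an injective linear map reflecting all pp-formulas. -/
def IsPureEmbedding {M N : Type u} [AddCommGroup M] [Module R M] [AddCommGroup N]
    [Module R N] (f : M →ₗ[R] N) : Prop :=
  Function.Injective f ∧
    ∀ (n : ℕ) (φ : PPFormula R n) (x : Fin n → M), φ.Holds N (f ∘ x) → φ.Holds M x

/-- A module is pure-injective if it is injective over all pure embeddings. -/
def IsPureInjective (M : Type u) [AddCommGroup M] [Module R M] : Prop :=
  ∀ (A B : Type u) [AddCommGroup A] [Module R A] [AddCommGroup B] [Module R B]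
    (f : A →ₗ[R] B), IsPureEmbedding R f →
      ∀ g : A →ₗ[R] M, ∃ h : B →ₗ[R] M, h.comp f = g

/-- A module is Σ-pure-injective iff it has no infinite properly descending chain of
pp-definable subgroups, i.e. every descending chain stabilizes. -/
def IsSigmaPureInjective (M : Type u) [AddCommGroup M] [Module R M] : Prop :=
  ∀ c : ℕ → PPFormula R 1, (∀ i, ((c (i + 1)).sub M : AddSubgroup M) ≤ (c i).sub M) →
    ∃ N : ℕ, ∀ i, N ≤ i → ((c i).sub M : AddSubgroup M) = (c N).sub M

/-- The ascending chain condition on pp-definable subgroups. -/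
def HasACCppSubgroups (M : Type u) [AddCommGroup M] [Module R M] : Prop :=
  ∀ c : ℕ → PPFormula R 1, (∀ i, ((c i).sub M : AddSubgroup M) ≤ (c (i + 1)).sub M) →
    ∃ N : ℕ, ∀ i, N ≤ i → ((c i).sub M : AddSubgroup M) = (c N).sub M

/-- The lattice of pp-definable subgroups of `M` has finite length. -/
def HasFiniteLengthPPLattice (M : Type u) [AddCommGroup M] [Module R M] : Prop :=
  ∃ B : ℕ, ∀ (m : ℕ) (c : Fin (m + 1) → PPFormula R 1),
    (∀ i : Fin m, ((c i.castSucc).sub M : AddSubgroup M) < (c i.succ).sub M) → m ≤ B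

/-- A module is indecomposable: non-zero, and `0`, `id` are its only idempotent
endomorphisms. -/
def IsIndecomposableModule (M : Type v) [AddCommGroup M] [Module R M] : Prop :=
  (∃ x : M, x ≠ 0) ∧ ∀ e : M →ₗ[R] M, e ∘ₗ e = e → e = 0 ∨ e = LinearMap.id

/-- A bundled module over `R`. -/
structure ModuleBdl (R : Type u) [Ring R] : Type (u + 1) where
  carrier : Type u
  [acg : AddCommGroup carrier]
  [mod : Module R carrier]

attribute [instance] ModuleBdl.acg ModuleBdl.mod

/-- `N` belongs to the Ziegler closure of the set `S` of modules: `N` is an indecomposable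
pure-injective module such that every basic Ziegler-open neighbourhood `(φ/ψ)` of `N` meets
`S`. -/
def MemZieglerClosure (S : Set (ModuleBdl R)) (N : ModuleBdl R) : Prop :=
  IsIndecomposableModule R N.carrier ∧ IsPureInjective R N.carrier ∧
    ∀ φ ψ : PPFormula R 1, ψ.Le φ →
      (ψ.sub N.carrier : AddSubgroup N.carrier) ≠ φ.sub N.carrier →
      ∃ M ∈ S, (ψ.sub M.carrier : AddSubgroup M.carrier) ≠ φ.sub M.carrier

/-- A generic module: indecomposable with pp-lattice of finite length. -/
def IsGenericModule (M : Type u) [AddCommGroup M] [Module R M] : Prop :=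
  IsIndecomposableModule R M ∧ HasFiniteLengthPPLattice R M

end Defs

/-- A short exact sequence `0 → A →f B →g C → 0` of modules is almost split if it does not
split, `A` and `C` are indecomposable, every non-split epimorphism `X → C` factors through
`g`, and every non-split monomorphism `A → X` factors through `f`. -/
def IsAlmostSplitSequence (R : Type u) [Ring R] {A B C : Type u}
    [AddCommGroup A] [Module R A] [AddCommGroup B] [Module R B]
    [AddCommGroup C] [Module R C] (f : A →ₗ[R] B) (g : B →ₗ[R] C) : Prop :=
  Function.Injective f ∧ Function.Surjective g ∧ LinearMap.ker g = LinearMap.range f ∧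
    (¬ ∃ s : C →ₗ[R] B, g ∘ₗ s = LinearMap.id) ∧
    IsIndecomposableModule R A ∧ IsIndecomposableModule R C ∧
    (∀ (X : Type u) [AddCommGroup X] [Module R X] (h : X →ₗ[R] C),
      Function.Surjective h → (¬ ∃ s : C →ₗ[R] X, h ∘ₗ s = LinearMap.id) →
        ∃ t : X →ₗ[R] B, g ∘ₗ t = h) ∧
    (∀ (X : Type u) [AddCommGroup X] [Module R X] (h : A →ₗ[R] X),
      Function.Injective h → (¬ ∃ r : X →ₗ[R] A, r ∘ₗ h = LinearMap.id) →
        ∃ t : B →ₗ[R] X, t ∘ₗ f = h)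

namespace PPFormula

variable {R : Type u} [Ring R]

theorem le_rfl' (φ : PPFormula R 1) : φ.Le φ := fun _ _ _ _ h => h

theorem Le.trans' {φ ψ ρ : PPFormula R 1} (h1 : φ.Le ψ) (h2 : ψ.Le ρ) : φ.Le ρ :=
  fun M _ _ x hx => h2 M x (h1 M x hx)

theorem mem_sub_iff {φ : PPFormula R 1} {M : Type v} [AddCommGroup M] [Module R M] {a : M} :
    a ∈ φ.sub M ↔ φ.Holds M (fun _ => a) := Iff.rfl

theorem holds_iff_mem {φ : PPFormula R 1} {M : Type v} [AddCommGroup M] [Module R M]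
    {x : Fin 1 → M} : φ.Holds M x ↔ x 0 ∈ φ.sub M := by
  have hx : x = fun _ => x 0 := funext fun i => by
    have : i = 0 := Subsingleton.elim i 0
    rw [this]
  rw [mem_sub_iff]
  constructor
  · intro h; rwa [← hx]
  · intro h; rwa [hx]

theorem sub_le_sub {φ ψ : PPFormula R 1} (h : φ.Le ψ) {M : Type u} [AddCommGroup M]
    [Module R M] {a : M} (ha : a ∈ φ.sub M) : a ∈ ψ.sub M :=
  h M (fun _ => a) ha

theorem holds_map {n : ℕ} (φ : PPFormula R n) {M : Type v} {N : Type w} [AddCommGroup M]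
    [Module R M] [AddCommGroup N] [Module R N] (f : M →ₗ[R] N) {x : Fin n → M}
    (h : φ.Holds M x) : φ.Holds N (fun i => f (x i)) := by
  obtain ⟨y, hy⟩ := h
  refine ⟨fun l => f (y l), fun j => ?_⟩
  have := congrArg f (hy j)
  simpa [map_add, map_sum, map_smul] using this

theorem sub_map {φ : PPFormula R 1} {M : Type v} {N : Type w} [AddCommGroup M] [Module R M]
    [AddCommGroup N] [Module R N] (f : M →ₗ[R] N) {a : M} (h : a ∈ φ.sub M) :
    f a ∈ φ.sub N :=
  holds_map φ f h

end PPFormula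
namespace PPFormula

variable {R : Type u} [Ring R]

/-- Build a pp-1-formula from data indexed by arbitrary finite types. -/
noncomputable def ofTypes (Y : Type y) (E : Type e) [Fintype Y] [Fintype E]
    (H : (Fin 1 ⊕ Y) → E → R) : PPFormula R 1 where
  nex := Fintype.card Y
  neq := Fintype.card E
  H := fun v j => H (Sum.map id (Fintype.equivFin Y).symm v) ((Fintype.equivFin E).symm j)

theorem ofTypes_holds {Y : Type y} {E : Type e} [Fintype Y] [Fintype E] (H : (Fin 1 ⊕ Y) → E → R)
    (M : Type v) [AddCommGroup M] [Module R M] (x : Fin 1 → M) :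
    (ofTypes Y E H).Holds M x ↔
      ∃ y : Y → M, ∀ e : E,
        H (Sum.inl 0) e • x 0 + ∑ l : Y, H (Sum.inr l) e • y l = 0 := by
  set eY := Fintype.equivFin Y
  set eE := Fintype.equivFin E
  constructor
  · rintro ⟨y, hy⟩
    refine ⟨fun l => y (eY l), fun e => ?_⟩
    have h := hy (eE e)
    simp only [ofTypes, Fin.sum_univ_one, Sum.map_inl, Sum.map_inr, id_eq,
      Equiv.symm_apply_apply] at h
    rw [← h]
    congr 1
    · simp [eE]
    refine (Equiv.sum_comp eY.symm fun l => H (Sum.inr l) e • y (eY l)).symm.trans ?_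
    simp [eY, eE]
    rfl
  · rintro ⟨y, hy⟩
    refine ⟨fun l => y (eY.symm l), fun j => ?_⟩
    have h := hy (eE.symm j)
    simp only [ofTypes, Fin.sum_univ_one, Sum.map_inl, Sum.map_inr, id_eq]
    rw [← h]
    congr 1
    exact Equiv.sum_comp eY.symm fun l => H (Sum.inr l) (eE.symm j) • y l

end PPFormula
namespace PPFormula

variable {R : Type u} [Ring R]

/-- Conjunction (meet) of two pp-1-formulas. -/
noncomputable def conj (φ ψ : PPFormula R 1) : PPFormula R 1 :=
  ofTypes (Fin φ.nex ⊕ Fin ψ.nex) (Fin φ.neq ⊕ Fin ψ.neq)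
    (Sum.elim
      (fun i => Sum.elim (fun e => φ.H (Sum.inl i) e) (fun e => ψ.H (Sum.inl i) e))
      (Sum.elim
        (fun l => Sum.elim (fun e => φ.H (Sum.inr l) e) (fun _ => 0))
        (fun l => Sum.elim (fun _ => 0) (fun e => ψ.H (Sum.inr l) e))))

theorem holds_conj {φ ψ : PPFormula R 1} {M : Type v} [AddCommGroup M] [Module R M]
    {x : Fin 1 → M} : (conj φ ψ).Holds M x ↔ φ.Holds M x ∧ ψ.Holds M x := by
  rw [conj, ofTypes_holds]
  constructor
  · rintro ⟨y, hy⟩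
    constructor
    · refine ⟨fun l => y (Sum.inl l), fun j => ?_⟩
      have h := hy (Sum.inl j)
      simpa [Fintype.sum_sum_type, Fin.sum_univ_one] using h
    · refine ⟨fun l => y (Sum.inr l), fun j => ?_⟩
      have h := hy (Sum.inr j)
      simpa [Fintype.sum_sum_type, Fin.sum_univ_one] using h
  · rintro ⟨⟨y1, hy1⟩, ⟨y2, hy2⟩⟩
    refine ⟨Sum.elim y1 y2, fun e => ?_⟩
    rcases e with e | e
    · have h := hy1 e
      simpa [Fintype.sum_sum_type, Fin.sum_univ_one] using h
    · have h := hy2 e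
      simpa [Fintype.sum_sum_type, Fin.sum_univ_one] using h

theorem conj_le_left {φ ψ : PPFormula R 1} : (conj φ ψ).Le φ :=
  fun _ _ _ _ h => (holds_conj.mp h).1

theorem conj_le_right {φ ψ : PPFormula R 1} : (conj φ ψ).Le ψ :=
  fun _ _ _ _ h => (holds_conj.mp h).2

theorem le_conj {φ ψ ρ : PPFormula R 1} (h1 : ρ.Le φ) (h2 : ρ.Le ψ) : ρ.Le (conj φ ψ) :=
  fun M _ _ x hx => holds_conj.mpr ⟨h1 M x hx, h2 M x hx⟩

/-- Join (sum) of two pp-1-formulas. -/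
noncomputable def join (φ ψ : PPFormula R 1) : PPFormula R 1 :=
  ofTypes ((Unit ⊕ Unit) ⊕ (Fin φ.nex ⊕ Fin ψ.nex)) (Unit ⊕ (Fin φ.neq ⊕ Fin ψ.neq))
    (Sum.elim
      (fun _ => Sum.elim (fun _ => (1 : R)) (fun _ => 0))
      (Sum.elim
        (Sum.elim
          (fun _ => Sum.elim (fun _ => (-1 : R))
            (Sum.elim (fun e => φ.H (Sum.inl 0) e) (fun _ => 0)))
          (fun _ => Sum.elim (fun _ => (-1 : R))
            (Sum.elim (fun _ => 0) (fun e => ψ.H (Sum.inl 0) e))))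
        (Sum.elim
          (fun l => Sum.elim (fun _ => 0)
            (Sum.elim (fun e => φ.H (Sum.inr l) e) (fun _ => 0)))
          (fun l => Sum.elim (fun _ => 0)
            (Sum.elim (fun _ => 0) (fun e => ψ.H (Sum.inr l) e))))))

theorem holds_join {φ ψ : PPFormula R 1} {M : Type v} [AddCommGroup M] [Module R M]
    {x : Fin 1 → M} :
    (join φ ψ).Holds M x ↔ ∃ u v : M, x 0 = u + v ∧ u ∈ φ.sub M ∧ v ∈ ψ.sub M := by
  rw [join, ofTypes_holds]
  constructor
  · rintro ⟨y, hy⟩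
    refine ⟨y (Sum.inl (Sum.inl ())), y (Sum.inl (Sum.inr ())), ?_, ?_, ?_⟩
    · have h := hy (Sum.inl ())
      simp only [Fintype.sum_sum_type, Finset.univ_unique, Finset.sum_singleton,
        Sum.elim_inl, Sum.elim_inr, one_smul, neg_smul, zero_smul, Finset.sum_const_zero,
        add_zero, PUnit.default_eq_unit] at h
      have h' : x 0 + (-(y (Sum.inl (Sum.inl ())) ) + -(y (Sum.inl (Sum.inr ())))) = 0 := by
        rw [← h]
      have := eq_neg_of_add_eq_zero_left h'
      rw [this]; abel
    · refine ⟨fun l => y (Sum.inr (Sum.inl l)), fun e => ?_⟩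
      have h := hy (Sum.inr (Sum.inl e))
      simpa [Fintype.sum_sum_type, Fin.sum_univ_one] using h
    · refine ⟨fun l => y (Sum.inr (Sum.inr l)), fun e => ?_⟩
      have h := hy (Sum.inr (Sum.inr e))
      simpa [Fintype.sum_sum_type, Fin.sum_univ_one] using h
  · rintro ⟨u, v, hx, ⟨y1, hy1⟩, ⟨y2, hy2⟩⟩
    refine ⟨Sum.elim (Sum.elim (fun _ => u) (fun _ => v)) (Sum.elim y1 y2), fun e => ?_⟩
    rcases e with e | e
    · simp only [Fintype.sum_sum_type, Finset.univ_unique, Finset.sum_singleton,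
        Sum.elim_inl, Sum.elim_inr, one_smul, neg_smul, zero_smul, Finset.sum_const_zero,
        add_zero, PUnit.default_eq_unit]
      rw [hx]; abel
    · rcases e with e | e
      · have h := hy1 e
        simpa [Fintype.sum_sum_type, Fin.sum_univ_one] using h
      · have h := hy2 e
        simpa [Fintype.sum_sum_type, Fin.sum_univ_one] using h

theorem left_le_join {φ ψ : PPFormula R 1} : φ.Le (join φ ψ) := by
  intro M _ _ x hx
  exact holds_join.mpr ⟨x 0, 0, by abel, holds_iff_mem.mp hx, (ψ.sub M).zero_mem⟩

theorem right_le_join {φ ψ : PPFormula R 1} : ψ.Le (join φ ψ) := by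
  intro M _ _ x hx
  exact holds_join.mpr ⟨0, x 0, by abel, (φ.sub M).zero_mem, holds_iff_mem.mp hx⟩

theorem join_le {φ ψ ρ : PPFormula R 1} (h1 : φ.Le ρ) (h2 : ψ.Le ρ) : (join φ ψ).Le ρ := by
  intro M _ _ x hx
  obtain ⟨u, v, hx0, hu, hv⟩ := holds_join.mp hx
  rw [holds_iff_mem, hx0]
  exact (ρ.sub M).add_mem (sub_le_sub h1 hu) (sub_le_sub h2 hv)

theorem join_mono_left {φ φ' ψ : PPFormula R 1} (h : φ.Le φ') :
    (join φ ψ).Le (join φ' ψ) :=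
  join_le (h.trans' left_le_join) right_le_join

/-- The modular law at the level of pp formulas. -/
theorem modular {c c' w : PPFormula R 1} (hcc : c.Le c') (h : c'.Le (join c w)) :
    c'.Le (join c (conj c' w)) := by
  intro M _ _ x hx
  obtain ⟨u, v, hx0, hu, hv⟩ := holds_join.mp (h M x hx)
  refine holds_join.mpr ⟨u, v, hx0, hu, ?_⟩
  rw [mem_sub_iff, holds_conj]
  have hx0' : x 0 ∈ c'.sub M := holds_iff_mem.mp hx
  have hu' : u ∈ c'.sub M := sub_le_sub hcc hu
  have : v ∈ c'.sub M := by
    have : v = x 0 - u := by rw [hx0]; abel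
    rw [this]
    exact (c'.sub M).sub_mem hx0' hu'
  exact ⟨this, hv⟩

/-- The formula `r • x = 0`. -/
def rEq (r : R) : PPFormula R 1 := ⟨0, 1, fun _ _ => r⟩

theorem holds_rEq {r : R} {M : Type v} [AddCommGroup M] [Module R M] {x : Fin 1 → M} :
    (rEq r).Holds M x ↔ r • x 0 = 0 := by
  constructor
  · rintro ⟨y, hy⟩
    have := hy ⟨0, Nat.one_pos⟩
    rw [show ∑ l, (rEq r).H (Sum.inr l) ⟨0, Nat.one_pos⟩ • y l = 0 from Fin.sum_univ_zero _] at this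
    simpa [rEq, Fin.sum_univ_one] using this
  · intro h
    exact ⟨Fin.elim0, fun j => by
      rw [show ∑ l, (rEq r).H (Sum.inr l) j • (Fin.elim0 l : M) = 0 from Fin.sum_univ_zero _]
      simpa [rEq, Fin.sum_univ_one] using h⟩

end PPFormula
namespace PPFormula

variable {R : Type u} [Ring R]

theorem mem_sub_prod {φ : PPFormula R 1} {M N : Type v} [AddCommGroup M] [Module R M]
    [AddCommGroup N] [Module R N] {z : M × N} :
    z ∈ φ.sub (M × N) ↔ z.1 ∈ φ.sub M ∧ z.2 ∈ φ.sub N := by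
  constructor
  · intro h
    exact ⟨sub_map (LinearMap.fst R M N) h, sub_map (LinearMap.snd R M N) h⟩
  · rintro ⟨⟨y1, h1⟩, ⟨y2, h2⟩⟩
    refine ⟨fun l => (y1 l, y2 l), fun j => ?_⟩
    have e1 := h1 j
    have e2 := h2 j
    refine Prod.ext ?_ ?_ <;>
      simp only [Prod.fst_add, Prod.snd_add, Prod.fst_sum, Prod.snd_sum, Prod.smul_fst,
        Prod.smul_snd, Prod.fst_zero, Prod.snd_zero] <;> assumption

/-- Linear combination map `(V → R) →ₗ[R] M` attached to a family `z : V → M`. -/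
def combo {V : Type w} [Fintype V] {M : Type v} [AddCommGroup M] [Module R M]
    (z : V → M) : (V → R) →ₗ[R] M where
  toFun f := ∑ v, f v • z v
  map_add' f g := by simp [add_smul, Finset.sum_add_distrib]
  map_smul' r f := by simp [mul_smul, Finset.smul_sum]

theorem combo_single {V : Type w} [Fintype V] [DecidableEq V] {M : Type v} [AddCommGroup M]
    [Module R M] (z : V → M) (v₀ : V) (r : R) :
    combo z (Pi.single v₀ r) = r • z v₀ := by
  rw [combo]
  simp only [LinearMap.coe_mk, AddHom.coe_mk]
  rw [Finset.sum_eq_single v₀]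
  · simp
  · intro b _ hb
    simp [Pi.single_eq_of_ne hb]
  · simp

end PPFormula
namespace PPFormula

variable {R : Type u} [Ring R]

/-- The submodule of relations of a pp-1-formula. -/
def frSub (ρ : PPFormula R 1) : Submodule R ((Fin 1 ⊕ Fin ρ.nex) → R) :=
  Submodule.span R (Set.range fun j : Fin ρ.neq => fun v => ρ.H v j)

/-- The free realization of a pp-1-formula. -/
abbrev frMod (ρ : PPFormula R 1) : Type u :=
  ((Fin 1 ⊕ Fin ρ.nex) → R) ⧸ frSub ρ

/-- The canonical point of the free realization. -/
def frPt (ρ : PPFormula R 1) : frMod ρ :=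
  Submodule.Quotient.mk (Pi.single (Sum.inl 0) 1 : (Fin 1 ⊕ Fin ρ.nex) → R)

theorem single_smul_sum (ρ : PPFormula R 1) (j : Fin ρ.neq) :
    (∑ v : Fin 1 ⊕ Fin ρ.nex, ρ.H v j • (Pi.single v 1 : (Fin 1 ⊕ Fin ρ.nex) → R))
      = fun w => ρ.H w j := by
  have h1 : ∀ v : Fin 1 ⊕ Fin ρ.nex,
      ρ.H v j • (Pi.single v 1 : (Fin 1 ⊕ Fin ρ.nex) → R) = Pi.single v (ρ.H v j) := by
    intro v
    ext w
    by_cases h : w = v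
    · subst h; simp [Pi.single_eq_same, smul_eq_mul]
    · simp [Pi.single_eq_of_ne h, smul_eq_mul]
  simp only [h1]
  exact Finset.univ_sum_single fun w => ρ.H w j

theorem fr_holds (ρ : PPFormula R 1) : ρ.Holds (frMod ρ) (fun _ => frPt ρ) := by
  refine ⟨fun l => Submodule.Quotient.mk
    (Pi.single (Sum.inr l) 1 : (Fin 1 ⊕ Fin ρ.nex) → R), fun j => ?_⟩
  have h2 : (Submodule.mkQ (frSub ρ)) (∑ v : Fin 1 ⊕ Fin ρ.nex,
      ρ.H v j • (Pi.single v 1 : (Fin 1 ⊕ Fin ρ.nex) → R)) = 0 := by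
    rw [Submodule.mkQ_apply, Submodule.Quotient.mk_eq_zero, single_smul_sum]
    exact Submodule.subset_span ⟨j, rfl⟩
  rw [map_sum] at h2
  simp only [map_smul, Fintype.sum_sum_type, Submodule.mkQ_apply] at h2
  simpa [frPt, Fin.sum_univ_one] using h2

theorem fr_univ (ρ : PPFormula R 1) {M : Type v} [AddCommGroup M] [Module R M]
    {x : Fin 1 → M} (hx : ρ.Holds M x) :
    ∃ h : frMod ρ →ₗ[R] M, h (frPt ρ) = x 0 := by
  obtain ⟨y, hy⟩ := hx
  set z : (Fin 1 ⊕ Fin ρ.nex) → M := Sum.elim (fun _ => x 0) y with hz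
  have hker : frSub ρ ≤ LinearMap.ker (combo z) := by
    rw [frSub, Submodule.span_le]
    rintro _ ⟨j, rfl⟩
    have h := hy j
    simp only [LinearMap.mem_ker, combo, LinearMap.coe_mk, AddHom.coe_mk, SetLike.mem_coe]
    rw [Fintype.sum_sum_type]
    have hx0 : ∀ i : Fin 1, x i = x 0 := fun i => by
      have : i = 0 := Subsingleton.elim i 0
      rw [this]
    simpa [hz, hx0] using h
  refine ⟨Submodule.liftQ _ (combo z) hker, ?_⟩
  rw [frPt, Submodule.liftQ_apply, combo_single]
  simp [hz]

theorem fr_gen (ρ σ : PPFormula R 1) (h : σ.Holds (frMod ρ) (fun _ => frPt ρ)) :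
    ρ.Le σ := by
  intro M _ _ x hx
  obtain ⟨f, hf⟩ := fr_univ ρ hx
  have := holds_map σ f h
  rw [holds_iff_mem] at this ⊢
  simpa [hf] using this

end PPFormula
namespace PPFormula

variable {R : Type u} [Ring R]

/-- The formula expressing `x = ∑ w v • y v` for generators `y` satisfying relations `rel`. -/
noncomputable def genFml {Y : Type y} {T : Type t} [Fintype Y] [Fintype T]
    (w : Y → R) (rel : T → Y → R) : PPFormula R 1 :=
  ofTypes Y (Unit ⊕ T)
    (Sum.elim
      (fun _ => Sum.elim (fun _ => (1 : R)) (fun _ => 0))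
      (fun v => Sum.elim (fun _ => -(w v)) (fun u => rel u v)))

theorem genFml_holds {Y : Type y} {T : Type t} [Fintype Y] [Fintype T]
    (w : Y → R) (rel : T → Y → R) (N : Type v) [AddCommGroup N] [Module R N]
    (x : Fin 1 → N) :
    (genFml w rel).Holds N x ↔ ∃ y : Y → N,
      (x 0 = ∑ v : Y, w v • y v) ∧ ∀ u : T, ∑ v : Y, rel u v • y v = 0 := by
  rw [genFml, ofTypes_holds]
  constructor
  · rintro ⟨y, hy⟩
    refine ⟨y, ?_, fun u => ?_⟩
    · have h := hy (Sum.inl ())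
      simp only [Sum.elim_inl, one_smul, neg_smul, Finset.sum_neg_distrib] at h
      have := eq_neg_of_add_eq_zero_left h
      rw [this]
      simp
    · have h := hy (Sum.inr u)
      simpa using h
  · rintro ⟨y, hy1, hy2⟩
    refine ⟨y, fun e => ?_⟩
    rcases e with e | u
    · simp only [Sum.elim_inl, one_smul, neg_smul, Finset.sum_neg_distrib]
      rw [hy1]
      simp
    · simpa using hy2 u

theorem exists_pointed_generator (M : Type u) [AddCommGroup M] [Module R M]
    [Module.FinitePresentation R M] (a : M) :
    ∃ φ : PPFormula R 1, φ.Generates M a ∧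
      ∀ (N : Type u) [AddCommGroup N] [Module R N] (t : N),
        φ.Holds N (fun _ => t) → ∃ h : M →ₗ[R] N, h a = t := by
  classical
  obtain ⟨s, hspan, hfg⟩ := ‹Module.FinitePresentation R M›.out
  set p : (↥s → R) →ₗ[R] M := combo (fun v : ↥s => (v : M)) with hp_def
  have hp : Function.Surjective p := by
    rw [← LinearMap.range_eq_top, ← top_le_iff, ← hspan, Submodule.span_le]
    intro m hm
    refine ⟨Pi.single (⟨m, hm⟩ : ↥s) 1, ?_⟩
    rw [hp_def, combo_single, one_smul]
  -- the kernel of `p` is finitely generated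
  have hker_fg : (LinearMap.ker p).FG := by
    set e := Finsupp.linearEquivFunOnFinite R R ↥s with he
    have hpe : ∀ f : ↥s →₀ R,
        p (e f) = Finsupp.linearCombination R ((↑) : ↥s → M) f := by
      intro f
      rw [Finsupp.linearCombination_apply, Finsupp.sum_fintype]
      · rfl
      · intro i; exact zero_smul R _
    have hmap : (LinearMap.ker
        (Finsupp.linearCombination R ((↑) : ↥s → M))).map (e : (↥s →₀ R) →ₗ[R] (↥s → R))
        = LinearMap.ker p := by
      ext x
      constructor
      · rintro ⟨f, hf, rfl⟩
        simpa [LinearMap.mem_ker, hpe f] using hf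
      · intro hx
        refine ⟨e.symm x, ?_, by simp⟩
        have h1 := hpe (e.symm x)
        rw [LinearEquiv.apply_symm_apply] at h1
        show e.symm x ∈ LinearMap.ker _
        rw [LinearMap.mem_ker, ← h1]
        exact hx
    rw [← hmap]
    exact Submodule.FG.map _ hfg
  obtain ⟨T, hT⟩ := hker_fg
  obtain ⟨w, hw⟩ := hp a
  set φ : PPFormula R 1 := genFml w (fun u : ↥T => (u : ↥s → R)) with hφ
  have hmem : a ∈ φ.sub M := by
    rw [mem_sub_iff, hφ, genFml_holds]
    refine ⟨fun v => (v : M), hw.symm, fun u => ?_⟩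
    have hu : (u : ↥s → R) ∈ LinearMap.ker p := by
      rw [← hT]
      exact Submodule.subset_span u.2
    simpa [hp_def, combo] using hu
  have hhom : ∀ (N : Type u) [AddCommGroup N] [Module R N] (t : N),
      φ.Holds N (fun _ => t) → ∃ h : M →ₗ[R] N, h a = t := by
    intro N _ _ t ht
    rw [hφ, genFml_holds] at ht
    obtain ⟨y, hy1, hy2⟩ := ht
    set q : (↥s → R) →ₗ[R] N := combo y with hq
    have hkq : LinearMap.ker p ≤ LinearMap.ker q := by
      rw [← hT, Submodule.span_le]
      intro x hx
      have := hy2 ⟨x, hx⟩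
      simpa [LinearMap.mem_ker, hq, combo] using this
    set eqv := p.quotKerEquivOfSurjective hp with heq
    refine ⟨(Submodule.liftQ _ q hkq).comp (eqv.symm : M →ₗ[R] _), ?_⟩
    have h1 : eqv (Submodule.Quotient.mk w) = a := by
      rw [heq, LinearMap.quotKerEquivOfSurjective]
      simp only [LinearEquiv.trans_apply]
      rw [← hw]
      rfl
    have h2 : eqv.symm a = Submodule.Quotient.mk w := by
      rw [LinearEquiv.symm_apply_eq, h1]
    simp only [LinearMap.coe_comp, Function.comp_apply, LinearEquiv.coe_coe, h2,
      Submodule.liftQ_apply]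
    rw [hy1]
    rfl
  refine ⟨φ, ⟨hmem, fun σ hσ => ?_⟩, hhom⟩
  intro N _ _ x hx
  obtain ⟨h, hh⟩ := hhom N (x 0) (holds_iff_mem.mpr (holds_iff_mem.mp hx))
  have := sub_map h hσ
  rw [hh] at this
  exact holds_iff_mem.mpr this

end PPFormula
namespace PPFormula

variable {R : Type u} [Ring R]

theorem dichotomy
    {A B : Type u} [AddCommGroup A] [Module R A] [AddCommGroup B] [Module R B]
    [Module.FinitePresentation R A]
    (f : A →ₗ[R] B) (hf : Function.Injective f)
    (hfac : ∀ (X : Type u) [AddCommGroup X] [Module R X] (h : A →ₗ[R] X),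
        Function.Injective h → (¬ ∃ r : X →ₗ[R] A, r ∘ₗ h = LinearMap.id) →
          ∃ t : B →ₗ[R] X, t ∘ₗ f = h)
    (a : A) (φ : PPFormula R 1) (hφ : φ.Generates A a)
    (β : PPFormula R 1) (hβ : f a ∈ β.sub B)
    (ρ : PPFormula R 1) (hβρ : β.Le ρ) (hρφ : ρ.Le φ) :
    φ.Le ρ ∨ ρ.Le β := by
  by_cases hρa : a ∈ ρ.sub A
  · exact Or.inl (hφ.2 ρ hρa)
  right
  classical
  have hρt : ρ.Holds (frMod ρ) (fun _ => frPt ρ) := fr_holds ρ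
  set N := frMod ρ with hN
  set t := frPt ρ with ht
  have hρfa : f a ∈ ρ.sub B := sub_le_sub hβρ hβ
  -- the amalgam of `(A, a)` and `(N, t)`
  set D : Submodule R (A × N) := Submodule.span R {((a, -t) : A × N)} with hD
  set p : A →ₗ[R] ((A × N) ⧸ D) := (Submodule.mkQ D).comp (LinearMap.inl R A N) with hp
  set q : N →ₗ[R] ((A × N) ⧸ D) := (Submodule.mkQ D).comp (LinearMap.inr R A N) with hq
  have hpq : p a = q t := by
    rw [hp, hq]
    simp only [LinearMap.coe_comp, Function.comp_apply, LinearMap.inl_apply,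
      LinearMap.inr_apply, Submodule.mkQ_apply]
    rw [Submodule.Quotient.eq]
    have h0 : ((a, (0 : N)) : A × N) - ((0 : A), t) = (a, -t) := by
      simp [Prod.ext_iff]
    rw [h0]
    exact Submodule.mem_span_singleton_self _
  have hsmul : ∀ r : R, r • t = 0 → r • a = 0 := by
    intro r hrt
    have h1 : (rEq r).Holds N (fun _ => t) := holds_rEq.mpr hrt
    have h2 : ρ.Le (rEq r) := fr_gen ρ (rEq r) h1
    have h3 : f a ∈ (rEq r).sub B := sub_le_sub h2 hρfa
    have h4 : r • f a = 0 := holds_rEq.mp (mem_sub_iff.mp h3)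
    rw [← map_smul] at h4
    exact hf (by simpa using h4)
  have hpinj : Function.Injective p := by
    rw [← LinearMap.ker_eq_bot]
    rw [LinearMap.ker_eq_bot']
    intro x hx
    have : ((x, (0 : N)) : A × N) ∈ D := by
      rw [← Submodule.Quotient.mk_eq_zero]
      exact hx
    rw [hD, Submodule.mem_span_singleton] at this
    obtain ⟨r, hr⟩ := this
    have h1 : r • a = x := congrArg Prod.fst hr
    have h2 : r • (-t) = 0 := congrArg Prod.snd hr
    have h3 : r • t = 0 := by
      rw [smul_neg] at h2
      simpa using h2
    rw [← h1]
    exact hsmul r h3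
  have hnonsplit : ¬ ∃ s : ((A × N) ⧸ D) →ₗ[R] A, s ∘ₗ p = LinearMap.id := by
    rintro ⟨s, hs⟩
    have h1 : s (q t) = a := by
      rw [← hpq]
      have := congrArg (fun g : A →ₗ[R] A => g a) hs
      simpa using this
    have h2 : ρ.Holds A (fun _ => (s ∘ₗ q) t) := by
      have := holds_map ρ (s ∘ₗ q) hρt
      simpa using this
    apply hρa
    rw [mem_sub_iff]
    have h3 : (s ∘ₗ q) t = a := by simpa using h1
    rwa [h3] at h2
  obtain ⟨g, hg⟩ := hfac _ p hpinj hnonsplit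
  -- a retraction onto `N`
  obtain ⟨φa, hφagen, hφahom⟩ := exists_pointed_generator (R := R) A a
  have hφt : φ.Holds N (fun _ => t) := hρφ N (fun _ => t) hρt
  have hφat : φa.Holds N (fun _ => t) := hφ.2 φa hφagen.1 N (fun _ => t) hφt
  obtain ⟨j, hj⟩ := hφahom N t hφat
  have hjker : D ≤ LinearMap.ker (j.coprod LinearMap.id) := by
    rw [hD, Submodule.span_singleton_le_iff_mem]
    rw [LinearMap.mem_ker, LinearMap.coprod_apply]
    rw [hj]
    simp
  set ret : ((A × N) ⧸ D) →ₗ[R] N := Submodule.liftQ D (j.coprod LinearMap.id) hjker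
    with hret
  have hretp : ret (p a) = t := by
    rw [hp]
    simp only [LinearMap.coe_comp, Function.comp_apply, LinearMap.inl_apply,
      Submodule.mkQ_apply, hret, Submodule.liftQ_apply, LinearMap.coprod_apply]
    rw [hj]
    simp
  have hβt : t ∈ β.sub N := by
    have h1 : (ret ∘ₗ g) (f a) = t := by
      have : g (f a) = p a := by
        have := congrArg (fun m : A →ₗ[R] (A × N) ⧸ D => m a) hg
        simpa using this
      simp only [LinearMap.coe_comp, Function.comp_apply, this, hretp]
    have h2 := sub_map (ret ∘ₗ g) hβ
    rwa [h1] at h2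
  -- conclude
  intro M _ _ x hx
  obtain ⟨h, hh⟩ := fr_univ ρ hx
  have := sub_map h hβt
  rw [hh] at this
  exact holds_iff_mem.mpr this

end PPFormula
namespace PPFormula

variable {R : Type u} [Ring R]

theorem chain_mono {m : ℕ} (d : Fin (m + 1) → PPFormula R 1)
    (h : ∀ i : Fin m, (d i.castSucc).Le (d i.succ)) :
    ∀ (b a : ℕ) (hb : b < m + 1) (hab : a ≤ b),
      (d ⟨a, lt_of_le_of_lt hab hb⟩).Le (d ⟨b, hb⟩) := by
  intro b
  induction b with
  | zero =>
    intro a hb hab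
    have : a = 0 := Nat.le_zero.mp hab
    subst this
    exact le_rfl' _
  | succ b ih =>
    intro a hb hab
    rcases Nat.eq_or_lt_of_le hab with rfl | hlt
    · exact le_rfl' _
    · have hab' : a ≤ b := Nat.lt_succ_iff.mp hlt
      have hb' : b < m + 1 := Nat.lt_of_succ_lt hb
      have step : (d ⟨b, hb'⟩).Le (d ⟨b + 1, hb⟩) := h ⟨b, Nat.lt_of_succ_lt_succ hb⟩
      exact Le.trans' (ih a hb' hab') step

theorem card_jumps_le {χ θ : PPFormula R 1} {n : ℕ}
    (hlen : IntervalLengthLE χ θ n) {m : ℕ} (d : Fin (m + 1) → PPFormula R 1)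
    (hbd : ∀ i, χ.Le (d i) ∧ (d i).Le θ)
    (hmono : ∀ i : Fin m, (d i.castSucc).Le (d i.succ))
    (D : Finset (Fin m)) (hD : ∀ j ∈ D, ¬ (d j.succ).Le (d j.castSucc)) :
    D.card ≤ n := by
  classical
  set k := D.card with hk
  set e := D.orderIsoOfFin hk.symm with he
  set c' : Fin (k + 1) → PPFormula R 1 := fun t =>
    if h : (t : ℕ) < k then d (Fin.castSucc ↑(e ⟨t, h⟩)) else d (Fin.last m) with hc'
  have mono := chain_mono d hmono
  have hcv : ∀ (t : Fin (k + 1)) (h : (t : ℕ) < k),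
      c' t = d (Fin.castSucc ↑(e ⟨t, h⟩)) := by
    intro t h
    rw [hc']
    exact dif_pos h
  have hcl : ∀ (t : Fin (k + 1)), ¬ ((t : ℕ) < k) → c' t = d (Fin.last m) := by
    intro t h
    rw [hc']
    exact dif_neg h
  refine hlen k c' (fun i => ?_) (fun i => ?_)
  · by_cases h : (i : ℕ) < k
    · rw [hcv i h]; exact hbd _
    · rw [hcl i h]; exact hbd _
  · have hik : ((i.castSucc : Fin (k + 1)) : ℕ) < k := by simpa using i.isLt
    have h1 : c' i.castSucc = d (Fin.castSucc ↑(e i)) := hcv i.castSucc hik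
    have hmemD : (↑(e i) : Fin m) ∈ D := (e i).2
    by_cases hs : ((i.succ : Fin (k + 1)) : ℕ) < k
    · have h2 : c' i.succ = d (Fin.castSucc ↑(e ⟨(i : ℕ) + 1, hs⟩)) := hcv i.succ hs
      have hlt : (↑(e i) : Fin m) < ↑(e ⟨(i : ℕ) + 1, hs⟩) := by
        have : i < (⟨(i : ℕ) + 1, hs⟩ : Fin k) := by
          rw [Fin.lt_def]; exact Nat.lt_succ_self _
        exact e.strictMono this
      have hltn : ((↑(e i) : Fin m) : ℕ) + 1 ≤ ((↑(e ⟨(i : ℕ) + 1, hs⟩) : Fin m) : ℕ) :=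
        hlt
      constructor
      · rw [h1, h2]
        exact mono _ _ (by omega) (by omega)
      · intro hcon
        rw [h1, h2] at hcon
        apply hD _ hmemD
        have hsucc : (d (Fin.succ ↑(e i))).Le (d (Fin.castSucc ↑(e ⟨(i : ℕ) + 1, hs⟩))) :=
          mono _ _ (by omega) (by simpa using hltn)
        exact Le.trans' hsucc hcon
    · have h2 : c' i.succ = d (Fin.last m) := hcl i.succ hs
      constructor
      · rw [h1, h2]
        exact mono _ _ (by omega) (by omega)
      · intro hcon
        rw [h1, h2] at hcon
        apply hD _ hmemD
        have hle : ((↑(e i) : Fin m) : ℕ) + 1 ≤ m := (↑(e i) : Fin m).isLt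
        have hsucc : (d (Fin.succ ↑(e i))).Le (d (Fin.last m)) :=
          mono _ _ (by omega) (by simpa using hle)
        exact Le.trans' hsucc hcon

end PPFormula
/-- Let `R` be an artin algebra.  Suppose `i : A → B₁` is an embedding, `μ : B₂ → C` is a
short embedding of length `n`, and
`0 → A →(i,π) B₁ ⊕ B₂ →(γ,μ) C → 0` is an almost split exact sequence.  Then `i` is a
short embedding of length at most `n + 1`. -/
theorem isShortOfLength_of_almostSplit
    (k : Type u) [CommRing k] [IsArtinianRing k]
    (R : Type u) [Ring R] [Algebra k R] [Module.Finite k R]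
    (A B₁ B₂ C : Type u) [AddCommGroup A] [Module R A] [AddCommGroup B₁] [Module R B₁]
    [AddCommGroup B₂] [Module R B₂] [AddCommGroup C] [Module R C]
    [Module.FinitePresentation R A] [Module.FinitePresentation R B₁]
    [Module.FinitePresentation R B₂] [Module.FinitePresentation R C]
    (i : A →ₗ[R] B₁) (π : A →ₗ[R] B₂) (γ : B₁ →ₗ[R] C) (μ : B₂ →ₗ[R] C) (n : ℕ)
    (hi : Function.Injective i)
    (hμ : IsShortOfLength R μ n)
    (hseq : IsAlmostSplitSequence R (LinearMap.prod i π) (γ.coprod μ)) :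
    IsShortOfLength R i (n + 1) := by
  classical
  obtain ⟨finj, gsurj, hker, hnosplit, hindA, hindC, hfacC, hfacA⟩ := hseq
  refine ⟨hi, ?_⟩
  intro a φ ψ hφgen hψgen
  intro m c hbd hstrict
  -- basic membership facts
  have hφa : a ∈ φ.sub A := hφgen.1
  have hψia : i a ∈ ψ.sub B₁ := hψgen.1
  have hφπa : π a ∈ φ.sub B₂ := PPFormula.sub_map π hφa
  -- canonical generators of the pp-types of `π a` and `μ (π a)`
  obtain ⟨θ, hθgen, hθhom⟩ := PPFormula.exists_pointed_generator (R := R) B₂ (π a)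
  obtain ⟨χ, hχgen, hχhom⟩ := PPFormula.exists_pointed_generator (R := R) C (μ (π a))
  have hθπa : π a ∈ θ.sub B₂ := hθgen.1
  have hθφ : θ.Le φ := hθgen.2 φ hφπa
  have hχθ : χ.Le θ := hχgen.2 θ (PPFormula.sub_map μ hθπa)
  -- `μ (π a) = - γ (i a)`
  have hsum : γ (i a) + μ (π a) = 0 := by
    have h1 : (LinearMap.prod i π) a ∈ LinearMap.range (LinearMap.prod i π) :=
      LinearMap.mem_range_self _ a
    rw [← hker] at h1
    simpa [LinearMap.coprod_apply, LinearMap.prod_apply] using h1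
  have hμπa : μ (π a) = - γ (i a) := eq_neg_of_add_eq_zero_right hsum
  have hcμ : ∀ t : Fin (m + 1), μ (π a) ∈ (c t).sub C := by
    intro t
    have h1 : γ (i a) ∈ ψ.sub C := PPFormula.sub_map γ hψia
    have h2 : μ (π a) ∈ ψ.sub C := by
      rw [hμπa]; exact (ψ.sub C).neg_mem h1
    exact PPFormula.sub_le_sub ((hbd t).1) h2
  have hχc : ∀ t, χ.Le (c t) := fun t => hχgen.2 (c t) (hcμ t)
  -- interval bound coming from the shortness of `μ`
  have hint : PPFormula.IntervalLengthLE χ θ n := hμ.2 (π a) θ χ hθgen hχgen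
  -- the meet chain
  set d : Fin (m + 1) → PPFormula R 1 := fun t => PPFormula.conj (c t) θ with hd
  have hdmono : ∀ t : Fin m, (d t.castSucc).Le (d t.succ) := fun t =>
    PPFormula.le_conj (PPFormula.Le.trans' PPFormula.conj_le_left (hstrict t).1)
      PPFormula.conj_le_right
  have hdbd : ∀ t, χ.Le (d t) ∧ (d t).Le θ := fun t =>
    ⟨PPFormula.le_conj (hχc t) hχθ, PPFormula.conj_le_right⟩
  set D : Finset (Fin m) :=
    Finset.univ.filter (fun t => ¬ (d t.succ).Le (d t.castSucc)) with hD
  have hDcard : D.card ≤ n :=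
    PPFormula.card_jumps_le hint d hdbd hdmono D (fun j hj => (Finset.mem_filter.mp hj).2)
  -- the join chain
  set w : PPFormula R 1 := PPFormula.conj θ φ with hw
  set g : Fin (m + 1) → PPFormula R 1 := fun t => PPFormula.join (c t) w with hg
  set β : PPFormula R 1 := PPFormula.join ψ θ with hβ
  have hβg : ∀ t, β.Le (g t) := by
    intro t
    refine PPFormula.join_le ?_ ?_
    · exact PPFormula.Le.trans' ((hbd t).1) PPFormula.left_le_join
    · exact PPFormula.Le.trans' (PPFormula.le_conj (PPFormula.le_rfl' θ) hθφ)
        PPFormula.right_le_join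
  have hgφ : ∀ t, (g t).Le φ := fun t =>
    PPFormula.join_le ((hbd t).2) PPFormula.conj_le_right
  have hβfa : (LinearMap.prod i π) a ∈ β.sub (B₁ × B₂) := by
    have hfa : (LinearMap.prod i π) a = (i a, π a) := rfl
    rw [hfa, PPFormula.mem_sub_prod]
    constructor
    · exact PPFormula.sub_le_sub PPFormula.left_le_join hψia
    · exact PPFormula.sub_le_sub PPFormula.right_le_join hθπa
  have hdich : ∀ t, φ.Le (g t) ∨ (g t).Le β := fun t =>
    PPFormula.dichotomy (LinearMap.prod i π) finj hfacA a φ hφgen β hβfa (g t)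
      (hβg t) (hgφ t)
  -- each collapse index of the meet chain gives a strict jump of the join chain
  have hgjump : ∀ t : Fin m, (d t.succ).Le (d t.castSucc) →
      ¬ (g t.succ).Le (g t.castSucc) := by
    intro t hcol hcon
    apply (hstrict t).2
    have h1 : (c t.succ).Le (PPFormula.join (c t.castSucc) w) :=
      PPFormula.Le.trans' PPFormula.left_le_join hcon
    have h2 := PPFormula.modular (hstrict t).1 h1
    have h3 : (PPFormula.conj (c t.succ) w).Le (c t.castSucc) := by
      have h4 : (PPFormula.conj (c t.succ) w).Le (d t.succ) :=
        PPFormula.le_conj PPFormula.conj_le_left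
          (PPFormula.Le.trans' PPFormula.conj_le_right PPFormula.conj_le_left)
      exact PPFormula.Le.trans' (PPFormula.Le.trans' h4 hcol) PPFormula.conj_le_left
    exact PPFormula.Le.trans' h2 (PPFormula.join_le (PPFormula.le_rfl' _) h3)
  set Dc : Finset (Fin m) :=
    Finset.univ.filter (fun t => (d t.succ).Le (d t.castSucc)) with hDc
  have hgmono : ∀ t : Fin m, (g t.castSucc).Le (g t.succ) := fun t =>
    PPFormula.join_mono_left (hstrict t).1
  have hgmono' := PPFormula.chain_mono g hgmono
  have hkey : ∀ t1 t2 : Fin m, t1 ∈ Dc → t2 ∈ Dc → t1 < t2 → False := by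
    intro t1 t2 ht1 ht2 hlt
    have hcol1 := (Finset.mem_filter.mp ht1).2
    have hcol2 := (Finset.mem_filter.mp ht2).2
    have hjump1 := hgjump t1 hcol1
    have hjump2 := hgjump t2 hcol2
    have hlt' : (t1 : ℕ) < (t2 : ℕ) := hlt
    rcases hdich t1.succ with hφle | hleβ
    · apply hjump2
      have ha : (g t2.succ).Le (g t1.succ) :=
        PPFormula.Le.trans' (hgφ t2.succ) hφle
      have hb : (g t1.succ).Le (g t2.castSucc) := hgmono' _ _ (by omega) (by omega)
      exact PPFormula.Le.trans' ha hb
    · exact hjump1 (PPFormula.Le.trans' hleβ (hβg t1.castSucc))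
  have hDccard : Dc.card ≤ 1 := by
    by_contra hcon
    push_neg at hcon
    obtain ⟨t1, ht1, t2, ht2, hne⟩ := Finset.one_lt_card.mp hcon
    rcases lt_or_gt_of_ne hne with h | h
    · exact hkey t1 t2 ht1 ht2 h
    · exact hkey t2 t1 ht2 ht1 h
  have hsplit : Dc.card + D.card = m := by
    rw [hDc, hD]
    rw [Finset.card_filter_add_card_filter_not]
    simp
  omega
end

section
/- Let R be an artin algebra, A, B ∈ mod-R and f ∈ Hom(A, B). Then f ∈ rad(A, B) if and only if for every non-zero a ∈ A, if φ generates the pp-type of a in A and ψ generates the pp-type of f(a) in B, then ψ < φ (strictly). -/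
universe u v

section Aux

open PPFormula

variable {R : Type u} [Ring R]

lemma PPFormula.Holds.map {n : ℕ} {φ : PPFormula R n}
    {M : Type v} {N : Type w} [AddCommGroup M] [Module R M] [AddCommGroup N] [Module R N]
    (f : M →ₗ[R] N) {x : Fin n → M} (h : φ.Holds M x) : φ.Holds N (f ∘ x) := by
  obtain ⟨y, hy⟩ := h
  refine ⟨f ∘ y, fun j => ?_⟩
  have h2 := congrArg f (hy j)
  simpa [map_add, map_sum, map_smul] using h2

lemma PPFormula.mem_sub_map {φ : PPFormula R 1}
    {M : Type v} {N : Type w} [AddCommGroup M] [Module R M] [AddCommGroup N] [Module R N]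
    (f : M →ₗ[R] N) {a : M} (h : a ∈ φ.sub M) : f a ∈ φ.sub N := by
  have h2 : φ.Holds N (f ∘ fun _ => a) := PPFormula.Holds.map f h
  exact h2

/-- Key lemma: in a finitely presented module every element has a generator of its pp-type,
and that generator has the hom-extension property. -/
lemma exists_generator (B : Type u) [AddCommGroup B] [Module R B]
    [Module.FinitePresentation R B] (b : B) :
    ∃ θ : PPFormula R 1, θ.Generates B b ∧
      ∀ (A : Type u) [AddCommGroup A] [Module R A] (a : A),
        a ∈ θ.sub A → ∃ g : B →ₗ[R] A, g b = a := by
  classical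
  obtain ⟨n, π, hπ⟩ := Module.Finite.exists_fin' R B
  obtain ⟨t, ht⟩ := Module.FinitePresentation.fg_ker π hπ
  set m := t.card with hm
  let r : Fin m → (Fin n → R) := fun j => (t.equivFin.symm j : Fin n → R)
  obtain ⟨v, hv⟩ := hπ b
  let θ : PPFormula R 1 :=
    { nex := n, neq := m + 1,
      H := fun p j =>
        Sum.elim (fun _ : Fin 1 => if j = 0 then (1 : R) else 0)
          (fun i : Fin n => Fin.cases (-(v i)) (fun j' => r j' i) j) p }
  have holds_iff : ∀ (M : Type u) (_ : AddCommGroup M) (_ : Module R M) (c : M),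
      θ.Holds M (fun _ => c) ↔
        ∃ y : Fin n → M, c = ∑ i, v i • y i ∧ ∀ j : Fin m, ∑ i, r j i • y i = 0 := by
    intro M _ _ c
    unfold PPFormula.Holds
    refine exists_congr fun y => ?_
    constructor
    · intro h
      constructor
      · have h0 := h 0
        simp only [θ, Sum.elim_inl, Sum.elim_inr, Fin.cases_zero, if_pos rfl,
          Fin.sum_univ_one, if_true, one_smul, neg_smul, Finset.sum_neg_distrib] at h0
        exact add_neg_eq_zero.mp h0
      · intro j'
        have hj := h j'.succ
        simp only [θ, Sum.elim_inl, Sum.elim_inr, Fin.cases_succ,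
          if_neg (Fin.succ_ne_zero j'), Fin.sum_univ_one, zero_smul, zero_add] at hj
        exact hj
    · rintro ⟨h1, h2⟩ j
      refine Fin.cases ?_ (fun j' => ?_) j
      · simp only [θ, Sum.elim_inl, Sum.elim_inr, Fin.cases_zero, if_pos rfl,
          Fin.sum_univ_one, if_true, one_smul, neg_smul, Finset.sum_neg_distrib]
        rw [h1]
        exact add_neg_cancel _
      · simp only [θ, Sum.elim_inl, Sum.elim_inr, Fin.cases_succ,
          if_neg (Fin.succ_ne_zero j'), Fin.sum_univ_one, zero_smul, zero_add]
        exact h2 j'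
  have hπw : ∀ w : Fin n → R, π w = ∑ i, w i • π (Pi.single i 1) := by
    intro w
    conv_lhs => rw [← Finset.univ_sum_single w]
    rw [map_sum]
    refine Finset.sum_congr rfl fun i _ => ?_
    rw [← map_smul]
    congr 1
    ext j
    simp [Pi.single_apply, mul_ite]
  have hrker : ∀ j : Fin m, π (r j) = 0 := by
    intro j
    have hmem : (r j) ∈ (t : Set (Fin n → R)) := (t.equivFin.symm j).2
    have : r j ∈ LinearMap.ker π := ht ▸ Submodule.subset_span hmem
    exact this
  have hmemθ : b ∈ θ.sub B := by
    show θ.Holds B (fun _ => b)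
    rw [holds_iff]
    refine ⟨fun i => π (Pi.single i 1), ?_, fun j => ?_⟩
    · rw [← hπw v, hv]
    · rw [← hπw (r j), hrker j]
  have homprop : ∀ (A : Type u) [AddCommGroup A] [Module R A] (a : A),
      a ∈ θ.sub A → ∃ g : B →ₗ[R] A, g b = a := by
    intro A _ _ a ha
    have ha' : θ.Holds A (fun _ => a) := ha
    rw [holds_iff] at ha'
    obtain ⟨y, hy1, hy2⟩ := ha'
    let h : (Fin n → R) →ₗ[R] A :=
      { toFun := fun w => ∑ i, w i • y i
        map_add' := fun w1 w2 => by
          simp [add_smul, Finset.sum_add_distrib]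
        map_smul' := fun c w => by
          simp only [Pi.smul_apply, smul_eq_mul, RingHom.id_apply, mul_smul, Finset.smul_sum] }
    have hle : LinearMap.ker π ≤ LinearMap.ker h := by
      rw [← ht, Submodule.span_le]
      intro w hw
      have hw' : w ∈ t := hw
      have : h w = 0 := by
        have := hy2 (t.equivFin ⟨w, hw'⟩)
        have hr : r (t.equivFin ⟨w, hw'⟩) = w := by
          simp [r]
        rw [hr] at this
        exact this
      exact this
    let e := LinearMap.quotKerEquivOfSurjective π hπ
    refine ⟨(Submodule.liftQ _ h hle) ∘ₗ (e.symm : B →ₗ[R] _), ?_⟩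
    have hesymm : e.symm b = Submodule.Quotient.mk v := by
      rw [LinearEquiv.symm_apply_eq]
      have h1 : e (Submodule.Quotient.mk v) = π v := rfl
      rw [h1, hv]
    show Submodule.liftQ _ h hle (e.symm b) = a
    rw [hesymm, Submodule.liftQ_apply]
    show (∑ i, v i • y i) = a
    exact hy1.symm
  refine ⟨θ, ⟨hmemθ, ?_⟩, homprop⟩
  intro χ hχ M _ _ x hx
  have hx1 : x = fun _ => x 0 := by
    funext i
    rw [Subsingleton.elim i 0]
  have hx' : θ.Holds M (fun _ => x 0) := by rw [← hx1]; exact hx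
  obtain ⟨g, hg⟩ := homprop M (x 0) hx'
  have := PPFormula.Holds.map (φ := χ) g (x := fun _ => b) hχ
  have heq : (g ∘ fun _ => b) = x := by
    funext i
    simp [hg]
    rw [Subsingleton.elim i 0]
  rwa [heq] at this

end Aux

/-- The radical of `mod-R`: `f ∈ rad(A,B)` iff `1_A - g ∘ f` is an isomorphism for every
`g : B → A`. -/
def InModRadical {R : Type u} [Ring R] {A B : Type u} [AddCommGroup A] [Module R A]
    [AddCommGroup B] [Module R B] (f : A →ₗ[R] B) : Prop :=
  ∀ g : B →ₗ[R] A, IsUnit ((1 : Module.End R A) - g ∘ₗ f)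

/-- Let `R` be an artin algebra (an algebra, finitely generated as a module, over a
commutative artinian ring `k`), let `A, B` be finitely presented `R`-modules and
`f : A → B` a homomorphism.  Then `f` lies in the radical `rad(A,B)` of `mod-R` iff for
every non-zero `a ∈ A`, whenever `φ` generates the pp-type of `a` in `A` and `ψ` generates
the pp-type of `f(a)` in `B`, then `ψ < φ` strictly. -/
theorem mem_radical_iff_strictly_increases_ppTypes
    (k : Type u) [CommRing k] [IsArtinianRing k]
    (R : Type u) [Ring R] [Algebra k R] [Module.Finite k R]
    (A B : Type u) [AddCommGroup A] [Module R A] [AddCommGroup B] [Module R B]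
    [Module.FinitePresentation R A] [Module.FinitePresentation R B]
    (f : A →ₗ[R] B) :
    InModRadical f ↔
      ∀ a : A, a ≠ 0 → ∀ φ ψ : PPFormula R 1,
        φ.Generates A a → ψ.Generates B (f a) → ψ.Le φ ∧ ¬ φ.Le ψ := by
  constructor
  · intro hrad a ha φ ψ hφ hψ
    have hfa : f a ∈ φ.sub B := PPFormula.mem_sub_map f hφ.1
    refine ⟨hψ.2 φ hfa, ?_⟩
    intro hle
    have haψ : a ∈ ψ.sub A := hle A (fun _ => a) hφ.1
    obtain ⟨θ, hθgen, hθhom⟩ := exists_generator (R := R) B (f a)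
    have haθ : a ∈ θ.sub A := hψ.2 θ hθgen.1 A (fun _ => a) haψ
    obtain ⟨g, hg⟩ := hθhom A a haθ
    have hinj : Function.Injective ((1 : Module.End R A) - g ∘ₗ f) :=
      ((Module.End.isUnit_iff _).mp (hrad g)).injective
    apply ha
    apply hinj
    show ((1 : Module.End R A) - g ∘ₗ f) a = ((1 : Module.End R A) - g ∘ₗ f) 0
    simp [LinearMap.sub_apply, LinearMap.comp_apply, Module.End.one_apply, hg]
  · intro hyp g
    haveI h1 : IsArtinian k R := inferInstance
    haveI h2 : IsArtinianRing R := isArtinian_of_tower k h1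
    haveI h3 : IsArtinian R A := inferInstance
    rw [Module.End.isUnit_iff]
    have hinj : Function.Injective ((1 : Module.End R A) - g ∘ₗ f) := by
      rw [injective_iff_map_eq_zero]
      intro a ha0
      by_contra hne
      have hfix : a = g (f a) := by
        have h4 : a - g (f a) = 0 := by
          simpa [LinearMap.sub_apply, LinearMap.comp_apply, Module.End.one_apply] using ha0
        exact sub_eq_zero.mp h4
      obtain ⟨φ, hφgen, _⟩ := exists_generator (R := R) A a
      obtain ⟨ψ, hψgen, _⟩ := exists_generator (R := R) B (f a)
      obtain ⟨_, hnle⟩ := hyp a hne φ ψ hφgen hψgen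
      apply hnle
      have haψ : a ∈ ψ.sub A := by
        rw [hfix]
        exact PPFormula.mem_sub_map g hψgen.1
      exact hφgen.2 ψ haψ
    exact ⟨hinj, IsArtinian.surjective_of_injective_endomorphism _ hinj⟩
end
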